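/- Let p be an odd prime, let F be a finite extension of ℚ_p, and let E/F be a quadratic extension which is tamely ramified, i.e., p does not divide the ramification index e(E/F). Let χ : F^× → ℂ^× be a group homomorphism that is trivial on U_F^n for some n ≥ 0, and suppose its conductor a(χ) = m satisfies m ≥ 2. Then the conductor of the homomorphism χ ∘ N_{E/F} : E^× → ℂ^× equals e(E/F)·(m − 1) + 1. -/

import Mathlib

noncomputable section

/-- `u ∈ U_F^n`: for `n = 0` this is membership in `𝒪_F^×`; for `n ≥ 1` it is membership in
`1 + 𝔪_F^n` (here `O` is the ring of integers and `m` its maximal ideal). -/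
def inUnitFiltration {F : Type*} [Field F] (O : Subring F) (m : Ideal O) (n : ℕ) (u : Fˣ) : Prop :=
  (u : F) ∈ O ∧ ((u⁻¹ : Fˣ) : F) ∈ O ∧ ∃ x : O, x ∈ m ^ n ∧ (x : F) = (u : F) - 1

/-- The character `χ` is trivial on the unit group `U_F^n`. -/
def trivialOnUnits {F : Type*} [Field F] (O : Subring F) (m : Ideal O) (χ : Fˣ →* ℂˣ)
    (n : ℕ) : Prop :=
  ∀ u : Fˣ, inUnitFiltration O m n u → χ u = 1

/-- The conductor `a(χ)`: the least `n ≥ 0` such that `χ` is trivial on `U_F^n`. -/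
noncomputable def charConductor {F : Type*} [Field F] (O : Subring F) (m : Ideal O)
    (χ : Fˣ →* ℂˣ) : ℕ :=
  sInf {n | trivialOnUnits O m χ n}

open Polynomial in
lemma ConductorAux.normal_of_finrank_two {F E : Type*} [Field F] [Field E] [Algebra F E]
    (h : Module.finrank F E = 2) : Normal F E := by
  have : FiniteDimensional F E := FiniteDimensional.of_finrank_eq_succ h
  rw [normal_iff]
  intro x
  have hint : IsIntegral F x := Algebra.IsIntegral.isIntegral x
  refine ⟨hint, ?_⟩
  set P := (minpoly F x).map (algebraMap F E) with hP
  have hPne : P ≠ 0 := Polynomial.map_ne_zero (minpoly.ne_zero hint)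
  have hroot : IsRoot P x := by
    rw [hP, IsRoot, eval_map, ← aeval_def, minpoly.aeval]
  obtain ⟨q, hq⟩ := dvd_iff_isRoot.mpr hroot
  have hq0 : q ≠ 0 := by rintro rfl; rw [mul_zero] at hq; exact hPne hq
  have hdeg : P.natDegree ≤ 2 :=
    le_trans natDegree_map_le (le_trans (minpoly.natDegree_le x) (le_of_eq h))
  have hqdeg : q.natDegree ≤ 1 := by
    have h2 := natDegree_mul (X_sub_C_ne_zero x) hq0
    rw [← hq, natDegree_X_sub_C] at h2
    omega
  have hsp : Splits P := by
    rw [hq]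
    exact (Splits.X_sub_C _).mul (Splits.of_natDegree_le_one hqdeg)
  exact hsp

/-- Abstract "trace" lemma: if `t` is an additive map satisfying a projection formula
`t (φ a * b) = a * t b` and sending `J` into `I0`, then it sends `(map φ K) * J`
into `K * I0`. -/
lemma ConductorAux.trace_aux {A B : Type*} [CommRing A] [CommRing B] (φ : A →+* B)
    (K : Ideal A) (J : Ideal B) (I0 : Ideal A) (t : B →+ A)
    (ht1 : ∀ (a : A) (b : B), t (φ a * b) = a * t b)
    (ht2 : ∀ b ∈ J, t b ∈ I0) :
    ∀ w ∈ Ideal.map φ K * J, t w ∈ K * I0 := by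
  intro w hw
  refine Submodule.mul_induction_on hw ?_ ?_
  · intro a ha b hb
    have key : ∀ a' : B, a' ∈ Ideal.map φ K → ∀ b' ∈ J, t (a' * b') ∈ K * I0 := by
      intro a' ha'
      refine Submodule.span_induction ?_ ?_ ?_ ?_ ha'
      · rintro _ ⟨y, hy, rfl⟩ b' hb'
        rw [ht1]
        exact Ideal.mul_mem_mul hy (ht2 _ hb')
      · intro b' _
        rw [zero_mul, map_zero]
        exact Submodule.zero_mem _
      · intro x y _ _ hx hy b' hb'
        rw [add_mul, map_add]
        exact Submodule.add_mem _ (hx b' hb') (hy b' hb')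
      · intro c x _ hx b' hb'
        have : c • x * b' = x * (c * b') := by
          rw [smul_eq_mul]; ring
        rw [this]
        exact hx _ (J.mul_mem_left c hb')
    exact key a ha b hb
  · intro x y hx hy
    rw [map_add]
    exact Submodule.add_mem _ hx hy

set_option maxHeartbeats 1000000 in
/-- for a tamely ramified quadratic extension `E/F` of `p`-adic fields (`p` odd)
and a character `χ` of `F^×` of conductor `m ≥ 2`, the conductor of `χ ∘ N_{E/F}` equals
`e(E/F)·(m-1) + 1`. -/
theorem conductor_baseChange_tame
    (p : ℕ) [Fact p.Prime] (hp : p ≠ 2)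
    (F E : Type*) [Field F] [Field E]
    [Algebra ℚ_[p] F] [FiniteDimensional ℚ_[p] F]
    [Algebra ℤ_[p] F] [IsScalarTower ℤ_[p] ℚ_[p] F]
    [Algebra F E] [Algebra ℚ_[p] E] [IsScalarTower ℚ_[p] F E]
    [Algebra ℤ_[p] E] [IsScalarTower ℤ_[p] ℚ_[p] E]
    -- `E/F` is quadratic
    (hquad : Module.finrank F E = 2)
    -- `O_F` is the ring of integers of `F` and `m_F` its maximal ideal
    (OF : Subring F) (hOF : ∀ x : F, x ∈ OF ↔ IsIntegral ℤ_[p] x)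
    (mF : Ideal OF) (hmF : ∀ x : OF, x ∈ mF ↔ ¬ IsUnit x)
    -- `O_E` is the ring of integers of `E` and `m_E` its maximal ideal
    (OE : Subring E) (hOE : ∀ x : E, x ∈ OE ↔ IsIntegral ℤ_[p] x)
    (mE : Ideal OE) (hmE : ∀ x : OE, x ∈ mE ↔ ¬ IsUnit x)
    (hmap : ∀ x : F, x ∈ OF → algebraMap F E x ∈ OE)
    -- `e` is the ramification index: `𝔪_F·𝒪_E = 𝔪_E^e`
    (e : ℕ)
    (he : Ideal.span ((fun x : OF => (⟨algebraMap F E (x : F), hmap _ x.2⟩ : OE)) ''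
        (mF : Set OF)) = mE ^ e)
    -- `E/F` is tamely ramified
    (htame : ¬ (p ∣ e))
    -- `χ` is a character of `F^×`, trivial on `U_F^n` for some `n`, of conductor `m ≥ 2`
    (χ : Fˣ →* ℂˣ) (hχ : ∃ n, trivialOnUnits OF mF χ n)
    (m : ℕ) (hm : charConductor OF mF χ = m) (hm2 : 2 ≤ m) :
    charConductor OE mE (χ.comp (Units.map (Algebra.norm F : E →* F))) = e * (m - 1) + 1 := by
  classical
  have hppr : p.Prime := Fact.out
  have he1 : 1 ≤ e := by
    rcases Nat.eq_zero_or_pos e with h | h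
    · exact absurd (h ▸ dvd_zero p) htame
    · exact h
  -- basic instances
  haveI hFD : FiniteDimensional F E := FiniteDimensional.of_finrank_eq_succ hquad
  haveI hCZF : CharZero F := charZero_of_injective_algebraMap (algebraMap ℚ_[p] F).injective
  haveI hNormal : Normal F E := ConductorAux.normal_of_finrank_two hquad
  haveI hGal : IsGalois F E := { to_isSeparable := inferInstance, to_normal := hNormal }
  -- the scalar tower ℤ_[p] → F → E
  haveI htower : IsScalarTower ℤ_[p] F E := by
    refine IsScalarTower.of_algebraMap_eq' ?_
    rw [IsScalarTower.algebraMap_eq ℤ_[p] ℚ_[p] E, IsScalarTower.algebraMap_eq ℚ_[p] F E,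
      IsScalarTower.algebraMap_eq ℤ_[p] ℚ_[p] F, ← RingHom.comp_assoc]
  -- membership transfer along algebraMap F E
  have hOFE : ∀ y : F, algebraMap F E y ∈ OE ↔ y ∈ OF := by
    intro y
    rw [hOE, hOF]
    exact isIntegral_algHom_iff (IsScalarTower.toAlgHom ℤ_[p] F E)
      (algebraMap F E).injective
  -- the ring hom φ : OF → OE
  let φ : OF →+* OE :=
    { toFun := fun x : OF => (⟨algebraMap F E (x : F), hmap _ x.2⟩ : OE)
      map_one' := by ext; simp
      map_mul' := by intro a b; ext; simp
      map_zero' := by ext; simp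
      map_add' := by intro a b; ext; simp }
  have hφval : ∀ a : OF, (φ a : E) = algebraMap F E (a : F) := fun a => rfl
  -- units transfer
  have hφunit : ∀ a : OF, IsUnit (φ a) → IsUnit a := by
    intro a hu
    rcases isUnit_iff_exists.mp hu with ⟨b, hb, -⟩
    have h1 : algebraMap F E (a : F) * (b : E) = 1 := by
      have h2 := congrArg Subtype.val hb
      simpa [hφval] using h2
    have hane : (a : F) ≠ 0 := by
      rintro h0
      rw [h0, map_zero, zero_mul] at h1
      exact zero_ne_one h1
    have hbval : algebraMap F E ((a : F)⁻¹) = (b : E) := by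
      rw [map_inv₀]
      exact inv_eq_of_mul_eq_one_right h1
    have hbOF : ((a : F)⁻¹ : F) ∈ OF := (hOFE _).mp (hbval ▸ b.2)
    refine isUnit_iff_exists.mpr ⟨⟨(a : F)⁻¹, hbOF⟩, ?_, ?_⟩ <;>
      · ext
        simp [mul_inv_cancel₀ hane, inv_mul_cancel₀ hane]
  have hφmF : ∀ a : OF, φ a ∈ mE → a ∈ mF := by
    intro a h
    exact (hmF a).mpr fun hu => (hmE _).mp h (hu.map φ)
  have hmFφ : ∀ a : OF, a ∈ mF → φ a ∈ mE := by
    intro a h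
    exact (hmE _).mpr fun hu => (hmF a).mp h (hφunit a hu)
  -- Ideal.map φ mF = mE ^ e
  have hmapmF : Ideal.map φ mF = mE ^ e := he
  have hmapPow : ∀ j : ℕ, Ideal.map φ (mF ^ j) = mE ^ (e * j) := by
    intro j
    rw [Ideal.map_pow, hmapmF, ← pow_mul]
  -- Galois group: get the nontrivial automorphism σ
  obtain ⟨σ, hσ1, huniv⟩ :
      ∃ σ : E ≃ₐ[F] E, σ ≠ 1 ∧ (Finset.univ : Finset (E ≃ₐ[F] E)) = {1, σ} := by
    have hcard : Fintype.card (E ≃ₐ[F] E) = 2 := by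
      rw [Fintype.card_eq_nat_card, IsGalois.card_aut_eq_finrank, hquad]
    obtain ⟨a, b, hab, huniv⟩ := Finset.card_eq_two.mp
      (show (Finset.univ : Finset (E ≃ₐ[F] E)).card = 2 by rw [Finset.card_univ, hcard])
    have h1 : (1 : E ≃ₐ[F] E) ∈ ({a, b} : Finset (E ≃ₐ[F] E)) := huniv ▸ Finset.mem_univ 1
    rcases Finset.mem_insert.mp h1 with h | h
    · exact ⟨b, by rw [← h] at hab; exact (Ne.symm hab), by rw [huniv, ← h]⟩
    · have h' : (1 : E ≃ₐ[F] E) = b := Finset.mem_singleton.mp h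
      exact ⟨a, by rw [← h'] at hab; exact hab, by rw [huniv, ← h', Finset.pair_comm]⟩
  -- trace and norm formulas
  have hne1σ : (1 : E ≃ₐ[F] E) ≠ σ := fun h => hσ1 h.symm
  have htr : ∀ z : E, algebraMap F E (Algebra.trace F E z) = z + σ z := by
    intro z
    rw [trace_eq_sum_automorphisms, huniv, Finset.sum_pair hne1σ]
    simp
  have hnm : ∀ z : E, algebraMap F E (Algebra.norm F z) = z * σ z := by
    intro z
    rw [Algebra.norm_eq_prod_automorphisms, huniv, Finset.prod_pair hne1σ]
    simp
  -- σ-stability of the rings of integers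
  have hτOE : ∀ (τ : E ≃ₐ[F] E) (z : E), z ∈ OE → τ z ∈ OE := by
    intro τ z hz
    rw [hOE] at hz ⊢
    exact hz.map ((τ.restrictScalars ℤ_[p]).toAlgHom)
  have hσmE : ∀ z : OE, z ∈ mE → (⟨σ (z : E), hτOE σ _ z.2⟩ : OE) ∈ mE := by
    intro z hz
    rw [hmE] at hz ⊢
    intro hu
    apply hz
    rcases isUnit_iff_exists.mp hu with ⟨w, hw, -⟩
    have h1 : σ (z : E) * (w : E) = 1 := by
      have := congrArg Subtype.val hw
      simpa using this
    have h2 : (z : E) * σ.symm (w : E) = 1 := by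
      have h3 := congrArg σ.symm h1
      simpa [map_mul] using h3
    refine isUnit_iff_exists.mpr ⟨⟨σ.symm (w : E), hτOE σ.symm _ w.2⟩, ?_, ?_⟩
    · exact Subtype.ext h2
    · exact Subtype.ext (by push_cast; rw [mul_comm]; exact h2)
  -- the ring hom induced by σ on OE
  let τσ : OE →+* OE :=
    { toFun := fun z => ⟨σ (z : E), hτOE σ _ z.2⟩
      map_one' := by ext; simp
      map_mul' := by intro a b; ext; simp
      map_zero' := by ext; simp
      map_add' := by intro a b; ext; simp }
  have hσpow : ∀ (k : ℕ) (z : OE), z ∈ mE ^ k → (⟨σ (z : E), hτOE σ _ z.2⟩ : OE) ∈ mE ^ k := by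
    intro k z hz
    have h1 : τσ z ∈ Ideal.map τσ (mE ^ k) := Ideal.mem_map_of_mem τσ hz
    have h2 : Ideal.map τσ (mE ^ k) ≤ mE ^ k := by
      rw [Ideal.map_pow]
      refine Ideal.pow_right_mono ?_ k
      rw [Ideal.map_le_iff_le_comap]
      intro w hw
      exact hσmE w hw
    exact h2 h1
  -- trace as an additive map OE → OF
  have htrOF : ∀ z : OE, Algebra.trace F E (z : E) ∈ OF := by
    intro z
    apply (hOFE _).mp
    rw [htr]
    exact OE.add_mem z.2 (hτOE σ _ z.2)
  let t : OE →+ OF :=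
    { toFun := fun z => ⟨Algebra.trace F E (z : E), htrOF z⟩
      map_zero' := by ext; simp
      map_add' := by intro a b; ext; push_cast; simp }
  have ht1 : ∀ (a : OF) (b : OE), t (φ a * b) = a * t b := by
    intro a b
    ext
    show Algebra.trace F E ((φ a * b : OE) : E) = (a : F) * Algebra.trace F E (b : E)
    have hval : ((φ a * b : OE) : E) = (a : F) • (b : E) := by
      push_cast
      rw [Algebra.smul_def, hφval]
    rw [hval, map_smul, smul_eq_mul]
  have ht2 : ∀ b ∈ mE, t b ∈ mF := by
    intro b hb
    apply hφmF
    have hφtb : φ (t b) = (b + ⟨σ (b : E), hτOE σ _ b.2⟩ : OE) := by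
      ext
      rw [hφval]
      show algebraMap F E (Algebra.trace F E (b : E)) = _
      rw [htr]
      push_cast
      ring
    rw [hφtb]
    exact Ideal.add_mem _ hb (hσmE b hb)
  have hT : ∀ (j : ℕ) (w : OE), w ∈ Ideal.map φ (mF ^ j) * mE → t w ∈ mF ^ (j + 1) := by
    intro j w hw
    have h1 := ConductorAux.trace_aux φ (mF ^ j) mE mF t ht1 ht2 w hw
    rwa [← pow_succ] at h1
  -- p is not a unit in OF
  have hpmF : ((p : ℕ) : OF) ∈ mF := by
    rw [hmF]
    intro hu
    rcases isUnit_iff_exists.mp hu with ⟨b, hb, -⟩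
    have hpF : (((p : ℕ) : OF) : F) = algebraMap ℚ_[p] F ((p : ℕ) : ℚ_[p]) := by
      push_cast
      simp [map_natCast]
    have h1 : algebraMap ℚ_[p] F ((p : ℕ) : ℚ_[p]) * (b : F) = 1 := by
      have h2 := congrArg Subtype.val hb
      rw [← hpF]
      simpa using h2
    have hbval : algebraMap ℚ_[p] F (((p : ℕ) : ℚ_[p])⁻¹) = (b : F) := by
      rw [map_inv₀]
      exact inv_eq_of_mul_eq_one_right h1
    have hbint : IsIntegral ℤ_[p] (algebraMap ℚ_[p] F (((p : ℕ) : ℚ_[p])⁻¹)) :=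
      hbval ▸ (hOF _).mp b.2
    have hint2 : IsIntegral ℤ_[p] (((p : ℕ) : ℚ_[p])⁻¹) :=
      (isIntegral_algHom_iff (IsScalarTower.toAlgHom ℤ_[p] ℚ_[p] F)
        (algebraMap ℚ_[p] F).injective).mp hbint
    obtain ⟨z, hz⟩ := IsIntegrallyClosed.isIntegral_iff.mp hint2
    have hz1 : ((z : ℚ_[p]) : ℚ_[p]) = ((p : ℕ) : ℚ_[p])⁻¹ := by
      rw [← PadicInt.algebraMap_apply, hz]
    have hnz : ‖(z : ℚ_[p])‖ ≤ 1 := z.2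
    rw [hz1, norm_inv] at hnz
    have hnp : ‖((p : ℕ) : ℚ_[p])‖ = ((p : ℝ))⁻¹ := by
      simpa using Padic.norm_p (p := p)
    rw [hnp, inv_inv] at hnz
    have : (2 : ℝ) ≤ (p : ℝ) := by exact_mod_cast hppr.two_le
    linarith
  -- 2 is a unit in OF
  have h2unit : IsUnit (2 : OF) := by
    by_contra h2
    have h2m : (2 : OF) ∈ mF := (hmF _).mpr h2
    obtain ⟨t', ht'⟩ := hppr.odd_of_ne_two hp
    have h1m : (1 : OF) ∈ mF := by
      have key : ((p : ℕ) : OF) - 2 * (t' : OF) = 1 := by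
        rw [ht']
        push_cast
        ring
      rw [← key]
      exact Ideal.sub_mem _ hpmF (Ideal.mul_mem_right _ _ h2m)
    exact (hmF 1).mp h1m isUnit_one
  have hone_add_unit : ∀ y : OF, y ∈ mF → IsUnit (1 + y) := by
    intro y hy
    by_contra h
    have h1 : (1 + y) ∈ mF := (hmF _).mpr h
    have h2 : (1 : OF) ∈ mF := by
      have h3 := Ideal.sub_mem mF h1 hy
      simpa using h3
    exact (hmF 1).mp h2 isUnit_one
  -- triviality of χ at level m
  have htrivm : trivialOnUnits OF mF χ m := by
    have h := Nat.sInf_mem (s := {n | trivialOnUnits OF mF χ n}) hχ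
    have h2 : sInf {n | trivialOnUnits OF mF χ n} = m := hm
    rwa [h2] at h
  -- === upper bound: χ∘N is trivial on U_E^{e(m-1)+1} ===
  have hupper : trivialOnUnits OE mE (χ.comp (Units.map (Algebra.norm F : E →* F)))
      (e * (m - 1) + 1) := by
    rintro u ⟨huO, huinv, x, hxmem, hxval⟩
    have hxmem' : x ∈ Ideal.map φ (mF ^ (m - 1)) * mE := by
      rw [hmapPow, ← pow_succ]
      exact hxmem
    have hTx := hT (m - 1) x hxmem'
    rw [show m - 1 + 1 = m by omega] at hTx
    -- the conjugate of x
    have hx'mem : (⟨σ (x : E), hτOE σ _ x.2⟩ : OE) ∈ mE ^ (e * (m - 1) + 1) := hσpow _ x hxmem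
    have hxx' : x * ⟨σ (x : E), hτOE σ _ x.2⟩ ∈ Ideal.map φ (mF ^ m) * mE := by
      rw [hmapPow, ← pow_succ]
      have h1 : x * ⟨σ (x : E), hτOE σ _ x.2⟩ ∈
          mE ^ ((e * (m - 1) + 1) + (e * (m - 1) + 1)) := by
        rw [pow_add]
        exact Ideal.mul_mem_mul hxmem hx'mem
      have h2 : e * (m - 1) + e = e * m := by
        rw [← Nat.mul_succ]
        congr 1
        omega
      have h3 : e * 1 ≤ e * (m - 1) := Nat.mul_le_mul_left e (by omega)
      exact Ideal.pow_le_pow_right (by omega) h1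
    have hTN := hT m _ hxx'
    -- identify t (x * x') with 2 * norm x
    have ht2N : ((t (x * ⟨σ (x : E), hτOE σ _ x.2⟩) : OF) : F) = 2 * Algebra.norm F (x : E) := by
      show Algebra.trace F E ((x * (⟨σ (x : E), hτOE σ _ x.2⟩ : OE) : OE) : E) = _
      have hval : ((x * (⟨σ (x : E), hτOE σ _ x.2⟩ : OE) : OE) : E) =
          algebraMap F E (Algebra.norm F (x : E)) := by
        push_cast
        rw [hnm]
      rw [hval, Algebra.trace_algebraMap, hquad]
      push_cast
      ring
    -- norm x lies in OF and in mF^m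
    obtain ⟨c, hc⟩ := h2unit.exists_right_inv
    have hcval : (2 : F) * (c : F) = 1 := by
      have := congrArg Subtype.val hc
      push_cast at this
      exact this
    have hNval : Algebra.norm F (x : E) =
        (c : F) * ((t (x * ⟨σ (x : E), hτOE σ _ x.2⟩) : OF) : F) := by
      rw [ht2N, ← mul_assoc, mul_comm (c : F) 2, hcval, one_mul]
    have hNOF : Algebra.norm F (x : E) ∈ OF := by
      rw [hNval]
      exact OF.mul_mem c.2 (t _).2
    have hNmF : (⟨Algebra.norm F (x : E), hNOF⟩ : OF) ∈ mF ^ m := by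
      have heq : (⟨Algebra.norm F (x : E), hNOF⟩ : OF) =
          c * t (x * ⟨σ (x : E), hτOE σ _ x.2⟩) := by
        ext
        push_cast
        exact hNval
      rw [heq]
      exact Ideal.mul_mem_left _ _ (Ideal.pow_le_pow_right (by omega) hTN)
    -- the element y = Tr x + N x of mF^m
    set y : OF := t x + ⟨Algebra.norm F (x : E), hNOF⟩ with hy
    have hymem : y ∈ mF ^ m := Ideal.add_mem _ hTx hNmF
    -- the norm of u
    have huval : (u : E) = 1 + (x : E) := by rw [hxval]; ring
    have hNu : algebraMap F E (Algebra.norm F (u : E)) =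
        algebraMap F E (1 + (y : F)) := by
      rw [hnm, huval]
      have hσu : σ (1 + (x : E)) = 1 + σ (x : E) := by rw [map_add, map_one]
      rw [hσu, hy]
      have hyv : ((t x + (⟨Algebra.norm F (x : E), hNOF⟩ : OF) : OF) : F) =
          ((t x : OF) : F) + Algebra.norm F (x : E) := rfl
      have h4 : algebraMap F E (((t x : OF)) : F) = (x : E) + σ (x : E) := htr (x : E)
      rw [hyv, map_add, map_add, map_one, h4, hnm]
      ring
    have hNu' : Algebra.norm F (u : E) = 1 + (y : F) :=
      (algebraMap F E).injective hNu
    -- the unit N(u) lies in U_F^m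
    have hyunit : IsUnit ((1 : OF) + y) := by
      apply hone_add_unit
      have h1 : mF ^ m ≤ mF := by
        have := Ideal.pow_le_pow_right (I := mF) (show 1 ≤ m by omega)
        simpa using this
      exact h1 hymem
    obtain ⟨w, hw⟩ := hyunit.exists_right_inv
    have hwval : ((1 : F) + (y : F)) * (w : F) = 1 := by
      have := congrArg Subtype.val hw
      push_cast at this
      exact this
    have hNuval : ((Units.map (Algebra.norm F : E →* F) u : Fˣ) : F) = 1 + (y : F) := by
      rw [Units.coe_map]
      exact hNu'
    have hfil : inUnitFiltration OF mF m (Units.map (Algebra.norm F : E →* F) u) := by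
      refine ⟨?_, ?_, y, hymem, ?_⟩
      · rw [hNuval]
        exact OF.add_mem OF.one_mem y.2
      · have h1 : ((Units.map (Algebra.norm F : E →* F) u : Fˣ) : F) * (w : F) = 1 := by
          rw [hNuval]
          exact hwval
        have hinv : (((Units.map (Algebra.norm F : E →* F) u)⁻¹ : Fˣ) : F) = (w : F) := by
          rw [Units.val_inv_eq_inv_val]
          exact inv_eq_of_mul_eq_one_right h1
        rw [hinv]
        exact w.2
      · rw [hNuval]; ring
    exact htrivm _ hfil
  -- === lower bound: χ∘N is nontrivial on U_E^{e(m-1)} ===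
  obtain ⟨u0, hu0f, hu0χ⟩ : ∃ u0 : Fˣ, inUnitFiltration OF mF (m - 1) u0 ∧ χ u0 ≠ 1 := by
    have hnm1 : ¬ trivialOnUnits OF mF χ (m - 1) := by
      intro h
      have h1 : sInf {n | trivialOnUnits OF mF χ n} ≤ m - 1 := Nat.sInf_le h
      have h2 : sInf {n | trivialOnUnits OF mF χ n} = m := hm
      omega
    simp only [trivialOnUnits, not_forall] at hnm1
    obtain ⟨u0, h1, h2⟩ := hnm1
    exact ⟨u0, h1, h2⟩
  obtain ⟨hu0O, hu0inv, x0, hx0mem, hx0val⟩ := hu0f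
  have hU0 : ((u0 : F)) = 1 + ((x0 : OF) : F) := by rw [hx0val]; ring
  -- u0 ^ p lies in U_F^m
  have hbin : ((1 : OF) + x0) ^ p - 1 ∈ mF ^ m := by
    rw [add_comm, add_pow, Finset.sum_range_succ']
    simp only [pow_zero, one_pow, one_mul, Nat.choose_zero_right, Nat.cast_one, mul_one]
    rw [add_sub_cancel_right]
    refine Ideal.sum_mem _ ?_
    intro i _
    rcases Nat.eq_zero_or_pos i with rfl | hipos
    · simp only [zero_add, pow_one, Nat.choose_one_right]
      have h1 : x0 * ((p : ℕ) : OF) ∈ mF ^ (m - 1) * mF := Ideal.mul_mem_mul hx0mem hpmF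
      rw [← pow_succ, show m - 1 + 1 = m by omega] at h1
      exact h1
    · have h1 : x0 ^ (i + 1) ∈ (mF ^ (m - 1)) ^ (i + 1) := Ideal.pow_mem_pow hx0mem _
      rw [← pow_mul] at h1
      have h2 : x0 ^ (i + 1) ∈ mF ^ m := by
        refine Ideal.pow_le_pow_right ?_ h1
        have h3 : (m - 1) * 2 ≤ (m - 1) * (i + 1) := Nat.mul_le_mul_left _ (by omega)
        omega
      exact Ideal.mul_mem_right _ _ h2
  have hpowfil : inUnitFiltration OF mF m (u0 ^ p) := by
    refine ⟨?_, ?_, ((1 : OF) + x0) ^ p - 1, hbin, ?_⟩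
    · rw [Units.val_pow_eq_pow_val]
      exact OF.pow_mem hu0O p
    · rw [← inv_pow, Units.val_pow_eq_pow_val]
      exact OF.pow_mem hu0inv p
    · push_cast
      rw [hU0]
  have hχp : χ u0 ^ p = 1 := by
    have h1 := htrivm _ hpowfil
    rwa [map_pow] at h1
  have hχsq : χ u0 ^ 2 ≠ 1 := by
    intro h2
    obtain ⟨t', ht'⟩ := hppr.odd_of_ne_two hp
    apply hu0χ
    have h3 : χ u0 = χ u0 ^ p := by
      rw [ht', pow_succ, pow_mul, h2, one_pow, one_mul]
    rw [h3, hχp]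
  -- the unit in E coming from u0
  set uE : Eˣ := Units.map ((algebraMap F E : F →+* E) : F →* E) u0 with huE
  have hNuE : Units.map (Algebra.norm F : E →* F) uE = u0 ^ 2 := by
    ext
    show Algebra.norm F (algebraMap F E (u0 : F)) = ((u0 ^ 2 : Fˣ) : F)
    rw [Algebra.norm_algebraMap, hquad, Units.val_pow_eq_pow_val]
  have hχEuE : (χ.comp (Units.map (Algebra.norm F : E →* F))) uE ≠ 1 := by
    show χ (Units.map (Algebra.norm F : E →* F) uE) ≠ 1
    rw [hNuE, map_pow]
    exact hχsq
  have huEval : ((uE : Eˣ) : E) = algebraMap F E (u0 : F) := rfl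
  have huEfil : inUnitFiltration OE mE (e * (m - 1)) uE := by
    refine ⟨?_, ?_, φ x0, ?_, ?_⟩
    · rw [huEval]
      exact hmap _ hu0O
    · have hinv : ((uE⁻¹ : Eˣ) : E) = algebraMap F E ((u0⁻¹ : Fˣ) : F) := by
        rw [← map_inv]
        rfl
      rw [hinv]
      exact hmap _ hu0inv
    · have h1 : φ x0 ∈ Ideal.map φ (mF ^ (m - 1)) := Ideal.mem_map_of_mem φ hx0mem
      rwa [hmapPow] at h1
    · rw [hφval, huEval, hx0val, map_sub, map_one]
  -- === conclusion ===
  have hlow : ∀ j, trivialOnUnits OE mE (χ.comp (Units.map (Algebra.norm F : E →* F))) j →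
      e * (m - 1) + 1 ≤ j := by
    intro j hj
    by_contra hlt
    push_neg at hlt
    apply hχEuE
    apply hj uE
    obtain ⟨h1, h2, xw, hxw, hvw⟩ := huEfil
    exact ⟨h1, h2, xw, Ideal.pow_le_pow_right (by omega) hxw, hvw⟩
  show sInf {n | trivialOnUnits OE mE (χ.comp (Units.map (Algebra.norm F : E →* F))) n} =
    e * (m - 1) + 1
  exact le_antisymm (Nat.sInf_le hupper) (hlow _ (Nat.sInf_mem (s := {n | trivialOnUnits OE mE (χ.comp (Units.map (Algebra.norm F : E →* F))) n}) ⟨_, hupper⟩))
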